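/- Let η ∈ ℕ^N be a composition and I = {t_1 < t_2 < ... < t_s} a nonempty subset of {1,...,N}. Define c_I(η) by: (c_I(η))_{t_j} = η_{t_{j+1}} for j = 1,...,s−1, (c_I(η))_{t_s} = η_{t_1} + 1, and (c_I(η))_i = η_i for i ∉ I. Then |c_I(η)| = |η| + 1, and η ≼ c_I(η) ≼ η + (1^N) where ≼ is the order: ν ≼ μ iff there is π ∈ S_N with ν_i < μ_{π(i)} for i < π(i) and ν_i ≤ μ_{π(i)} for i ≥ π(i). -/
import Mathlib


/-- The partial order `≼` on compositions. -/
def Preceq {N : ℕ} (ν η : Fin N → ℕ) : Prop :=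
  ∃ π : Equiv.Perm (Fin N), ∀ i : Fin N,
    (i < π i → ν i < η (π i)) ∧ (π i ≤ i → ν i ≤ η (π i))

/-- The composition `c_I(η)`: for `I = {t_1 < … < t_s}`, it sends `t_j ↦ η_{t_{j+1}}`
(`j < s`), `t_s ↦ η_{t_1} + 1`, and fixes the entries off `I`. -/
def cI {N : ℕ} (η : Fin N → ℕ) (I : Finset (Fin N)) : Fin N → ℕ := fun i =>
  if hi : i ∈ I then
    if h : (I.filter fun j => i < j).Nonempty
    then η ((I.filter fun j => i < j).min' h)
    else η (I.min' ⟨i, hi⟩) + 1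
  else η i

namespace CIAux

variable {N : ℕ} (I : Finset (Fin N))

/-- the cyclic "next element of I" map -/
def nxt (i : Fin N) : Fin N :=
  if hi : i ∈ I then
    if h : (I.filter fun j => i < j).Nonempty
    then (I.filter fun j => i < j).min' h
    else I.min' ⟨i, hi⟩
  else i

variable {I}

lemma nxt_of_not_mem {i : Fin N} (hi : i ∉ I) : nxt I i = i := by
  simp [nxt, hi]

lemma nxt_of_nonempty {i : Fin N} (hi : i ∈ I)
    (h : (I.filter fun j => i < j).Nonempty) :
    nxt I i = (I.filter fun j => i < j).min' h := by
  simp [nxt, hi, h]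

lemma nxt_of_empty {i : Fin N} (hi : i ∈ I)
    (h : ¬ (I.filter fun j => i < j).Nonempty) :
    nxt I i = I.min' ⟨i, hi⟩ := by
  simp [nxt, hi, h]

lemma nxt_mem {i : Fin N} (hi : i ∈ I) : nxt I i ∈ I := by
  by_cases h : (I.filter fun j => i < j).Nonempty
  · rw [nxt_of_nonempty hi h]
    exact (Finset.mem_filter.mp (Finset.min'_mem _ h)).1
  · rw [nxt_of_empty hi h]
    exact Finset.min'_mem _ _

lemma lt_nxt_of_nonempty {i : Fin N} (hi : i ∈ I)
    (h : (I.filter fun j => i < j).Nonempty) : i < nxt I i := by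
  rw [nxt_of_nonempty hi h]
  exact (Finset.mem_filter.mp (Finset.min'_mem _ h)).2

lemma nxt_le_of_empty {i : Fin N} (hi : i ∈ I)
    (h : ¬ (I.filter fun j => i < j).Nonempty) : nxt I i ≤ i := by
  rw [nxt_of_empty hi h]
  exact Finset.min'_le _ _ hi

lemma empty_iff_max (hI : I.Nonempty) {i : Fin N} (hi : i ∈ I) :
    ¬ (I.filter fun j => i < j).Nonempty ↔ i = I.max' hI := by
  constructor
  · intro h
    by_contra hne
    have hlt : i < I.max' hI := lt_of_le_of_ne (Finset.le_max' I i hi) hne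
    exact h ⟨I.max' hI, Finset.mem_filter.mpr ⟨Finset.max'_mem I hI, hlt⟩⟩
  · rintro rfl ⟨x, hx⟩
    rcases Finset.mem_filter.mp hx with ⟨hxI, hlt⟩
    exact absurd (Finset.le_max' I x hxI) (not_le.mpr hlt)

lemma nxt_inj : Function.Injective (nxt I) := by
  intro a b hab
  by_cases ha : a ∈ I <;> by_cases hb : b ∈ I
  · by_cases hfa : (I.filter fun j => a < j).Nonempty <;>
      by_cases hfb : (I.filter fun j => b < j).Nonempty
    · rw [nxt_of_nonempty ha hfa, nxt_of_nonempty hb hfb] at hab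
      by_contra hne
      rcases lt_or_gt_of_ne hne with h | h
      · have hbmem : b ∈ I.filter fun j => a < j := Finset.mem_filter.mpr ⟨hb, h⟩
        have h1 := Finset.min'_le _ _ hbmem
        rw [hab] at h1
        have h2 : b < (I.filter fun j => b < j).min' hfb :=
          (Finset.mem_filter.mp (Finset.min'_mem _ hfb)).2
        exact absurd (lt_of_le_of_lt h1 h2) (lt_irrefl _)
      · have hamem : a ∈ I.filter fun j => b < j := Finset.mem_filter.mpr ⟨ha, h⟩
        have h1 := Finset.min'_le _ _ hamem
        rw [← hab] at h1
        have h2 : a < (I.filter fun j => a < j).min' hfa :=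
          (Finset.mem_filter.mp (Finset.min'_mem _ hfa)).2
        exact absurd (lt_of_le_of_lt h1 h2) (lt_irrefl _)
    · exfalso
      have h1 : a < nxt I a := lt_nxt_of_nonempty ha hfa
      have h2 : nxt I b ≤ b := nxt_le_of_empty hb hfb
      rw [nxt_of_empty hb hfb] at h2 hab
      have h3 : I.min' ⟨b, hb⟩ ≤ a := Finset.min'_le _ _ ha
      rw [← hab] at h3
      exact absurd (lt_of_lt_of_le h1 h3) (lt_irrefl _)
    · exfalso
      have h1 : b < nxt I b := lt_nxt_of_nonempty hb hfb
      rw [nxt_of_empty ha hfa] at hab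
      have h3 : I.min' ⟨a, ha⟩ ≤ b := Finset.min'_le _ _ hb
      rw [hab] at h3
      exact absurd (lt_of_lt_of_le h1 h3) (lt_irrefl _)
    · have hIne : I.Nonempty := ⟨a, ha⟩
      rw [(empty_iff_max hIne ha).mp hfa, (empty_iff_max hIne hb).mp hfb]
  · exact absurd (hab ▸ nxt_mem ha) (by rwa [nxt_of_not_mem hb])
  · exact absurd ((hab.symm) ▸ nxt_mem hb) (by rwa [nxt_of_not_mem ha])
  · rw [nxt_of_not_mem ha, nxt_of_not_mem hb] at hab; exact hab

variable (I)

/-- the cyclic permutation on `I` -/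
noncomputable def σ : Equiv.Perm (Fin N) :=
  Equiv.ofBijective (nxt I) (Finite.injective_iff_bijective.mp nxt_inj)

lemma σ_apply (i : Fin N) : σ I i = nxt I i := rfl

variable {I}

lemma cI_eq (hI : I.Nonempty) (η : Fin N → ℕ) (i : Fin N) :
    cI η I i = η (σ I i) + (if i = I.max' hI then 1 else 0) := by
  by_cases hi : i ∈ I
  · by_cases h : (I.filter fun j => i < j).Nonempty
    · have hne : i ≠ I.max' hI := by
        intro he
        exact (empty_iff_max hI hi).mpr he h
      simp [cI, hi, h, σ_apply, nxt_of_nonempty hi h, hne]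
    · have he : i = I.max' hI := (empty_iff_max hI hi).mp h
      simp only [cI, dif_pos hi, dif_neg h, σ_apply, nxt_of_empty hi h, if_pos he]
  · have hne : i ≠ I.max' hI := fun he => hi (he ▸ Finset.max'_mem I hI)
    simp [cI, hi, σ_apply, nxt_of_not_mem hi, hne]

end CIAux

open CIAux in
theorem stmt_5 (N : ℕ) (η : Fin N → ℕ) (I : Finset (Fin N)) (hI : I.Nonempty) :
    (∑ i, cI η I i = (∑ i, η i) + 1) ∧
    Preceq η (cI η I) ∧ Preceq (cI η I) (fun i => η i + 1) := by
  refine ⟨?_, ?_, ?_⟩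
  · calc ∑ i, cI η I i
        = ∑ i, (η (σ I i) + (if i = I.max' hI then 1 else 0)) := by
          exact Finset.sum_congr rfl fun i _ => cI_eq hI η i
      _ = (∑ i, η (σ I i)) + ∑ i, (if i = I.max' hI then 1 else 0) :=
          Finset.sum_add_distrib
      _ = (∑ i, η i) + 1 := by
          rw [Equiv.sum_comp (σ I) η]
          simp
  · refine ⟨(σ I).symm, fun i => ?_⟩
    set j := (σ I).symm i with hj
    have hσj : σ I j = i := (σ I).apply_symm_apply i
    by_cases hi : i ∈ I
    · have hjI : j ∈ I := by
        by_contra hjI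
        have : σ I j = j := by rw [σ_apply, nxt_of_not_mem hjI]
        rw [hσj] at this
        exact hjI (this ▸ hi)
      by_cases h : (I.filter fun j' => j < j').Nonempty
      · -- j not max, cI j = η (σ j) = η i, and j < i
        have hlt : j < i := hσj ▸ lt_nxt_of_nonempty hjI h
        have hcI : cI η I j = η i := by
          rw [cI_eq hI η j, if_neg, add_zero, hσj]
          intro he
          exact (empty_iff_max hI hjI).mpr he h
        constructor
        · intro hc; exact absurd (lt_trans hc hlt) (lt_irrefl _)
        · intro _; rw [hcI]
      · -- j = max, σ j = min = i, cI j = η i + 1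
        have hemax : j = I.max' hI := (empty_iff_max hI hjI).mp h
        have hcI : cI η I j = η i + 1 := by
          rw [cI_eq hI η j, if_pos hemax, hσj]
        constructor
        · intro _; rw [hcI]; omega
        · intro _; rw [hcI]; omega
    · have hji : j = i := by
        have h1 : σ I i = i := by rw [σ_apply, nxt_of_not_mem hi]
        have := congrArg (σ I).symm h1
        rw [Equiv.symm_apply_apply] at this
        exact this.symm
      rw [hji]
      have hcI : cI η I i = η i := by simp [cI, hi]
      exact ⟨fun hc => absurd hc (lt_irrefl _), fun _ => le_of_eq hcI.symm⟩
  · refine ⟨σ I, fun i => ?_⟩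
    by_cases hi : i ∈ I
    · by_cases h : (I.filter fun j => i < j).Nonempty
      · have hlt : i < σ I i := lt_nxt_of_nonempty hi h
        have hcI : cI η I i = η (σ I i) := by
          rw [cI_eq hI η i, if_neg, add_zero]
          intro he
          exact (empty_iff_max hI hi).mpr he h
        exact ⟨fun _ => by simp only [hcI]; omega,
               fun hc => absurd (lt_of_lt_of_le hlt hc) (lt_irrefl _)⟩
      · have hle : σ I i ≤ i := nxt_le_of_empty hi h
        have hcI : cI η I i = η (σ I i) + 1 := by
          rw [cI_eq hI η i, if_pos ((empty_iff_max hI hi).mp h)]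
        exact ⟨fun hc => absurd (lt_of_lt_of_le hc hle) (lt_irrefl _),
               fun _ => by rw [hcI]⟩
    · have hfix : σ I i = i := by rw [σ_apply, nxt_of_not_mem hi]
      have hcI : cI η I i = η i := by simp [cI, hi]
      rw [hfix]
      exact ⟨fun hc => absurd hc (lt_irrefl _), fun _ => by simp only [hcI]; omega⟩
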